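/- arXiv:1306.2558 — 2 statements merged into one kernel-verified Lean document; each statement's English description precedes it below -/
import Mathlib

section
/- Bayesian update with a likelihood ratio below 1 everywhere on a monotone set decreases expected similarity: let S be a finite linearly ordered set, P a pmf on S, and L : S → ℝ≥0 a likelihood that is monotone nonincreasing in s, with ∑_s L(s)P(s) > 0 and L not constant on the support of P. Then the posterior Q(s) = L(s)P(s)/∑_{s'} L(s')P(s') satisfies ∑_s s·Q(s) < ∑_s s·P(s) when S ⊆ ℝ (identifying elements with real values). -/
/-- Bayesian update with a nonincreasing, nonconstant-on-support likelihood
strictly decreases expected similarity: 'negative' evidence lowers the mean. -/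
theorem antitone_likelihood_decreases_mean
    (S : Finset ℝ)
    (P : ℝ → ℝ) (hP0 : ∀ s ∈ S, 0 ≤ P s) (hP1 : ∑ s ∈ S, P s = 1)
    (L : ℝ → ℝ) (hL0 : ∀ s ∈ S, 0 ≤ L s)
    (hLmono : ∀ s₁ ∈ S, ∀ s₂ ∈ S, s₁ ≤ s₂ → L s₂ ≤ L s₁)
    (hZ : 0 < ∑ s ∈ S, L s * P s)
    (hnc : ∃ s₁ ∈ S, ∃ s₂ ∈ S, s₁ < s₂ ∧ 0 < P s₁ ∧ 0 < P s₂ ∧ L s₂ < L s₁) :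
    (∑ s ∈ S, s * (L s * P s / ∑ s' ∈ S, L s' * P s')) < ∑ s ∈ S, s * P s := by
  obtain ⟨s₁, hs₁, s₂, hs₂, hlt, hPa, hPb, hLlt⟩ := hnc
  set Z := ∑ s' ∈ S, L s' * P s' with hZdef
  set M := ∑ s ∈ S, s * P s with hMdef
  set E := ∑ s ∈ S, s * (L s * P s) with hEdef
  -- each symmetrized term is nonnegative
  have hterm : ∀ s ∈ S, ∀ t ∈ S, 0 ≤ P s * P t * ((L s - L t) * (t - s)) := by
    intro s hs t ht
    rcases le_total s t with h | h
    · exact mul_nonneg (mul_nonneg (hP0 s hs) (hP0 t ht))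
        (mul_nonneg (sub_nonneg.2 (hLmono s hs t ht h)) (sub_nonneg.2 h))
    · have h1 : 0 ≤ (L t - L s) := sub_nonneg.2 (hLmono t ht s hs h)
      have h2 : 0 ≤ (s - t) := sub_nonneg.2 h
      nlinarith [mul_nonneg (mul_nonneg (hP0 s hs) (hP0 t ht)) (mul_nonneg h1 h2)]
  -- the symmetrized double sum is strictly positive
  have hA : 0 < ∑ s ∈ S, ∑ t ∈ S, P s * P t * ((L s - L t) * (t - s)) := by
    apply Finset.sum_pos'
    · intro s hs
      exact Finset.sum_nonneg fun t ht => hterm s hs t ht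
    · refine ⟨s₁, hs₁, Finset.sum_pos' (fun t ht => hterm s₁ hs₁ t ht) ⟨s₂, hs₂, ?_⟩⟩
      exact mul_pos (mul_pos hPa hPb)
        (mul_pos (sub_pos.2 hLlt) (sub_pos.2 hlt))
  -- symmetrization: the double sum equals twice the "one-sided" sum
  have hsplit : (∑ s ∈ S, ∑ t ∈ S, P s * P t * ((L s - L t) * (t - s)))
      = 2 * ∑ s ∈ S, ∑ t ∈ S, P s * P t * (L s * (t - s)) := by
    have hswap : (∑ s ∈ S, ∑ t ∈ S, P s * P t * (L t * (t - s)))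
        = - ∑ s ∈ S, ∑ t ∈ S, P s * P t * (L s * (t - s)) := by
      rw [Finset.sum_comm]
      rw [← Finset.sum_neg_distrib]
      refine Finset.sum_congr rfl fun s _ => ?_
      rw [← Finset.sum_neg_distrib]
      exact Finset.sum_congr rfl fun t _ => by ring
    have hexp : (∑ s ∈ S, ∑ t ∈ S, P s * P t * ((L s - L t) * (t - s)))
        = (∑ s ∈ S, ∑ t ∈ S, P s * P t * (L s * (t - s)))
          - ∑ s ∈ S, ∑ t ∈ S, P s * P t * (L t * (t - s)) := by
      rw [← Finset.sum_sub_distrib]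
      refine Finset.sum_congr rfl fun s _ => ?_
      rw [← Finset.sum_sub_distrib]
      exact Finset.sum_congr rfl fun t _ => by ring
    rw [hexp, hswap]; ring
  -- the one-sided sum equals M * Z - E
  have hB : (∑ s ∈ S, ∑ t ∈ S, P s * P t * (L s * (t - s))) = M * Z - E := by
    have hinner : ∀ s ∈ S, (∑ t ∈ S, P s * P t * (L s * (t - s)))
        = P s * L s * (M - s) := by
      intro s hs
      calc (∑ t ∈ S, P s * P t * (L s * (t - s)))
          = (∑ t ∈ S, (P s * L s) * (t * P t)) - ∑ t ∈ S, (P s * L s * s) * P t := by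
            rw [← Finset.sum_sub_distrib]
            exact Finset.sum_congr rfl fun t _ => by ring
        _ = (P s * L s) * (∑ t ∈ S, t * P t) - (P s * L s * s) * (∑ t ∈ S, P t) := by
            rw [Finset.mul_sum, Finset.mul_sum]
        _ = P s * L s * (M - s) := by rw [hP1, ← hMdef]; ring
    rw [Finset.sum_congr rfl hinner]
    have : (∑ s ∈ S, P s * L s * (M - s))
        = M * (∑ s ∈ S, L s * P s) - ∑ s ∈ S, s * (L s * P s) := by
      rw [Finset.mul_sum, ← Finset.sum_sub_distrib]
      exact Finset.sum_congr rfl fun s _ => by ring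
    rw [this, ← hZdef, ← hEdef]
  have key : E < M * Z := by
    rw [hsplit, hB] at hA
    linarith
  have hgoal : (∑ s ∈ S, s * (L s * P s / Z)) = E / Z := by
    rw [hEdef, Finset.sum_div]
    exact Finset.sum_congr rfl fun s _ => by ring
  rw [hgoal, div_lt_iff₀ hZ]
  exact key
end

section
/- The mass-shift relation generates exactly first-order stochastic dominance on finite chains: if P and Q are pmfs on a finite linearly ordered set S and Q is first-order stochastically dominated by P with Q ≠ P, then Q can be obtained from P by a finite sequence of mass-shift operations, each moving positive mass from some b to some a < b. -/
/-- A single mass-shift operation: move mass `δ > 0` from `b` down to `a < b`. -/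
def MassShift {S : Type*} [LinearOrder S] (μ μ' : S → ℝ) : Prop :=
  ∃ (a b : S) (δ : ℝ), a < b ∧ 0 < δ ∧ δ ≤ μ b ∧
    μ' a = μ a + δ ∧ μ' b = μ b - δ ∧ ∀ s, s ≠ a → s ≠ b → μ' s = μ s

/-- Converse characterization: on a finite chain, if `Q` is first-order
stochastically dominated by `P` and `Q ≠ P`, then `Q` is obtained from `P` by a
finite sequence of downward mass shifts. -/
theorem stochastic_dominance_implies_mass_shifts
    {S : Type*} [Fintype S] [LinearOrder S]
    (P Q : S → ℝ)
    (hP0 : ∀ s, 0 ≤ P s) (hP1 : ∑ s, P s = 1)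
    (hQ0 : ∀ s, 0 ≤ Q s) (hQ1 : ∑ s, Q s = 1)
    (hdom : ∀ s₀ : S, (∑ s ∈ Finset.univ.filter (· ≤ s₀), P s)
      ≤ ∑ s ∈ Finset.univ.filter (· ≤ s₀), Q s)
    (hne : Q ≠ P) :
    Relation.ReflTransGen MassShift P Q := by
  classical
  suffices key : ∀ n (P : S → ℝ), (Finset.univ.filter (fun s => P s ≠ Q s)).card ≤ n →
      (∀ s, 0 ≤ P s) → (∑ s, P s = ∑ s, Q s) →
      (∀ s₀ : S, (∑ s ∈ Finset.univ.filter (· ≤ s₀), P s)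
        ≤ ∑ s ∈ Finset.univ.filter (· ≤ s₀), Q s) →
      Relation.ReflTransGen MassShift P Q by
    exact key _ P le_rfl hP0 (by rw [hP1, hQ1]) hdom
  intro n
  induction n with
  | zero =>
    intro P hcard _ _ _
    have hemp : (Finset.univ.filter (fun s => P s ≠ Q s)) = ∅ :=
      Finset.card_eq_zero.mp (Nat.le_zero.mp hcard)
    have hPQ : P = Q := by
      funext s
      by_contra h
      have : s ∈ Finset.univ.filter (fun s => P s ≠ Q s) := by simp [h]
      simp [hemp] at this
    exact hPQ ▸ Relation.ReflTransGen.refl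
  | succ n ih =>
    intro P hcard hP0' hsum hdom'
    by_cases hPQ : P = Q
    · exact hPQ ▸ Relation.ReflTransGen.refl
    set D := Finset.univ.filter (fun s => P s ≠ Q s) with hD
    have hDne : D.Nonempty := by
      rcases Function.ne_iff.mp hPQ with ⟨s, hs⟩
      exact ⟨s, by simp [hD, hs]⟩
    set a := D.min' hDne with ha
    have haD : a ∈ D := D.min'_mem hDne
    have haPQ : P a ≠ Q a := by simpa [hD] using haD
    have hlt_a : ∀ t, t < a → P t = Q t := by
      intro t ht
      by_contra h
      exact absurd (D.min'_le t (by simp [hD, h])) (not_le.mpr ht)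
    have haQ : P a < Q a := by
      have h1 := hdom' a
      have h2 : ∑ s ∈ Finset.univ.filter (· ≤ a), (Q s - P s) = Q a - P a := by
        refine Finset.sum_eq_single_of_mem a (by simp) ?_
        intro t ht hta
        have htlt : t < a := lt_of_le_of_ne (by simpa using ht) hta
        rw [hlt_a t htlt]; ring
      rw [Finset.sum_sub_distrib] at h2
      have h3 : (0:ℝ) ≤ Q a - P a := by linarith
      exact lt_of_le_of_ne (by linarith) haPQ
    set E := Finset.univ.filter (fun s => Q s < P s) with hE
    have hEne : E.Nonempty := by
      by_contra h
      rw [Finset.not_nonempty_iff_eq_empty] at h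
      have hle : ∀ s, P s ≤ Q s := by
        intro s
        by_contra hc
        have hs : s ∈ E := by simp [hE]; exact lt_of_not_ge hc
        simp [h] at hs
      have : ∑ s, P s < ∑ s, Q s :=
        Finset.sum_lt_sum (fun i _ => hle i) ⟨a, Finset.mem_univ a, haQ⟩
      linarith
    set b := E.min' hEne with hb
    have hbE : b ∈ E := E.min'_mem hEne
    have hbQ : Q b < P b := by simpa [hE] using hbE
    have hlt_b : ∀ t, t < b → P t ≤ Q t := by
      intro t ht
      by_contra h
      exact absurd (E.min'_le t (by simp [hE]; exact lt_of_not_ge h)) (not_le.mpr ht)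
    have hab : a < b := by
      have hle : a ≤ b := D.min'_le b (by simp [hD]; exact ne_of_gt hbQ)
      rcases hle.lt_or_eq with h | h
      · exact h
      · exfalso; rw [h] at haQ; linarith
    set δ := min (Q a - P a) (P b - Q b) with hδ
    have hδpos : 0 < δ := lt_min (by linarith) (by linarith)
    have hδa : δ ≤ Q a - P a := min_le_left _ _
    have hδb : δ ≤ P b - Q b := min_le_right _ _
    set P' := Function.update (Function.update P a (P a + δ)) b (P b - δ) with hP'
    have hP'a : P' a = P a + δ := by
      rw [hP', Function.update_of_ne hab.ne, Function.update_self]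
    have hP'b : P' b = P b - δ := by rw [hP', Function.update_self]
    have hP'other : ∀ s, s ≠ a → s ≠ b → P' s = P s := by
      intro s h1 h2
      rw [hP', Function.update_of_ne h2, Function.update_of_ne h1]
    have hshift : MassShift P P' :=
      ⟨a, b, δ, hab, hδpos, by linarith [hQ0 b], hP'a, hP'b, hP'other⟩
    have hdiff : ∀ F : Finset S, ∑ t ∈ F, P' t =
        ∑ t ∈ F, P t + ((if a ∈ F then δ else 0) + (if b ∈ F then -δ else 0)) := by
      intro F
      have hpt : ∀ t, P' t = P t + ((if t = a then δ else 0) + (if t = b then -δ else 0)) := by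
        intro t
        by_cases h1 : t = a
        · subst h1; simp [hP'a, hab.ne]
        · by_cases h2 : t = b
          · subst h2; rw [hP'b]; simp [h1]; ring
          · simp [hP'other t h1 h2, h1, h2]
      simp_rw [hpt, Finset.sum_add_distrib, Finset.sum_ite_eq' F]
    have hsum' : ∑ s, P' s = ∑ s, Q s := by
      rw [hdiff Finset.univ]
      simp [hsum]
    have hdom'' : ∀ s₀ : S, (∑ s ∈ Finset.univ.filter (· ≤ s₀), P' s)
        ≤ ∑ s ∈ Finset.univ.filter (· ≤ s₀), Q s := by
      intro s₀
      rw [hdiff]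
      by_cases h1 : a ≤ s₀
      · by_cases h2 : b ≤ s₀
        · simp only [Finset.mem_filter, Finset.mem_univ, true_and, h1, h2, if_true]
          linarith [hdom' s₀]
        · simp only [Finset.mem_filter, Finset.mem_univ, true_and, h1, h2, if_true, if_false]
          have hkey : Q a - P a ≤ ∑ t ∈ Finset.univ.filter (· ≤ s₀), (Q t - P t) := by
            apply Finset.single_le_sum (f := fun t => Q t - P t)
            · intro t ht
              have ht' : t ≤ s₀ := by simpa using ht
              have htb : t < b := lt_of_le_of_lt ht' (lt_of_not_ge h2)
              linarith [hlt_b t htb]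
            · simp [h1]
          rw [Finset.sum_sub_distrib] at hkey
          linarith
      · have h2 : ¬ b ≤ s₀ := fun h => h1 (le_trans hab.le h)
        simp only [Finset.mem_filter, Finset.mem_univ, true_and, h1, h2, if_false]
        linarith [hdom' s₀]
    have hP0'' : ∀ s, 0 ≤ P' s := by
      intro s
      by_cases h1 : s = a
      · subst h1; rw [hP'a]; linarith [hP0' a]
      · by_cases h2 : s = b
        · subst h2; rw [hP'b]; linarith [hQ0 b]
        · rw [hP'other s h1 h2]; exact hP0' s
    have hsubset : Finset.univ.filter (fun s => P' s ≠ Q s) ⊆ D := by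
      intro s hs
      simp only [Finset.mem_filter, Finset.mem_univ, true_and] at hs
      simp only [hD, Finset.mem_filter, Finset.mem_univ, true_and]
      by_contra h
      have hsa : s ≠ a := fun he => haPQ (he ▸ h)
      have hsb : s ≠ b := fun he => (ne_of_gt hbQ) (he ▸ h)
      exact hs (by rw [hP'other s hsa hsb, h])
    have hssub : Finset.univ.filter (fun s => P' s ≠ Q s) ⊂ D := by
      rcases le_total (Q a - P a) (P b - Q b) with h | h
      · have hδeq : δ = Q a - P a := min_eq_left h
        refine Finset.ssubset_iff_of_subset hsubset |>.mpr ⟨a, haD, ?_⟩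
        simp only [Finset.mem_filter, Finset.mem_univ, true_and, not_not]
        rw [hP'a, hδeq]; ring
      · have hδeq : δ = P b - Q b := min_eq_right h
        refine Finset.ssubset_iff_of_subset hsubset |>.mpr ⟨b, ?_, ?_⟩
        · simp [hD]; exact ne_of_gt hbQ
        · simp only [Finset.mem_filter, Finset.mem_univ, true_and, not_not]
          rw [hP'b, hδeq]; ring
    have hcard' : (Finset.univ.filter (fun s => P' s ≠ Q s)).card ≤ n := by
      have := Finset.card_lt_card hssub
      omega
    exact Relation.ReflTransGen.head hshift (ih P' hcard' hP0'' hsum' hdom'')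
end
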